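/- Let n, r be natural numbers with r ≥ 1 and r ≤ n, and let l : Fin r → ℕ with each l_j ≥ 1 and l_1 + ⋯ + l_r = n + 1. Consider the formal power series f = Σ_{d≥0} ((∏_{j=1}^{r} (l_j·d)!) / (d!)^{n+1}) · X^d ∈ ℚ[[X]], and let θ : ℚ[[X]] → ℚ[[X]] be the operator θ(g) = X·g′, where g′ is the formal derivative. Then θ^{n+1-r}(f) = (∏_{j=1}^{r} l_j) · X · ((∏_{j=1}^{r} ∏_{m=1}^{l_j-1} (l_j·θ + m·id)) f), where the product of operators is composition. -/

import Mathlib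

open Finset PowerSeries

private lemma fact_add_prod (a k : ℕ) :
    (a + k).factorial = a.factorial * ∏ m ∈ Finset.Icc 1 k, (a + m) := by
  induction k with
  | zero => simp
  | succ k ih =>
    rw [Finset.prod_Icc_succ_top (by omega), ← mul_assoc, ← ih,
      show a + (k + 1) = (a + k) + 1 from rfl, Nat.factorial_succ, mul_comm]

private lemma coeff_theta (θ : Module.End ℚ (PowerSeries ℚ))
    (hθ : ∀ g : PowerSeries ℚ, θ g = PowerSeries.X * g.derivativeFun)
    (g : PowerSeries ℚ) (d : ℕ) :
    PowerSeries.coeff d (θ g) = d * PowerSeries.coeff d g := by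
  rw [hθ]
  cases d with
  | zero => simp [PowerSeries.coeff_zero_eq_constantCoeff]
  | succ k =>
    rw [PowerSeries.coeff_succ_X_mul, show g.derivativeFun = PowerSeries.derivative ℚ g from rfl,
      PowerSeries.coeff_derivativeFun]
    push_cast; ring

private lemma coeff_theta_pow (θ : Module.End ℚ (PowerSeries ℚ))
    (hθ : ∀ g : PowerSeries ℚ, θ g = PowerSeries.X * g.derivativeFun)
    (k : ℕ) (g : PowerSeries ℚ) (d : ℕ) :
    PowerSeries.coeff d ((θ ^ k) g) = (d : ℚ) ^ k * PowerSeries.coeff d g := by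
  induction k with
  | zero => simp
  | succ k ih =>
    rw [pow_succ', Module.End.mul_apply, coeff_theta θ hθ, ih]
    ring

private lemma coeff_aeval (θ : Module.End ℚ (PowerSeries ℚ))
    (hθ : ∀ g : PowerSeries ℚ, θ g = PowerSeries.X * g.derivativeFun)
    (P : Polynomial ℚ) (g : PowerSeries ℚ) (d : ℕ) :
    PowerSeries.coeff d ((Polynomial.aeval θ P) g) =
      P.eval (d : ℚ) * PowerSeries.coeff d g := by
  induction P using Polynomial.induction_on' with
  | add p q hp hq =>
    rw [map_add, LinearMap.add_apply, map_add, hp, hq, Polynomial.eval_add]; ring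
  | monomial k a =>
    rw [Polynomial.aeval_monomial, Module.End.mul_apply, Polynomial.eval_monomial]
    have : ((algebraMap ℚ (Module.End ℚ (PowerSeries ℚ))) a) ((θ ^ k) g)
        = a • ((θ ^ k) g) := rfl
    rw [this, map_smul, coeff_theta_pow θ hθ, smul_eq_mul]
    ring

theorem givental_picard_fuchs_calabi_yau
    (n r : ℕ) (hr : 1 ≤ r) (hrn : r ≤ n) (l : Fin r → ℕ) (hl : ∀ j, 1 ≤ l j)
    (hsum : ∑ j, l j = n + 1)
    (f : PowerSeries ℚ)
    (hf : f = PowerSeries.mk fun d : ℕ =>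
      ((∏ j : Fin r, ((l j * d).factorial : ℚ)) / ((d.factorial : ℚ)) ^ (n + 1)))
    (θ : Module.End ℚ (PowerSeries ℚ))
    (hθ : ∀ g : PowerSeries ℚ, θ g = PowerSeries.X * g.derivativeFun) :
    (θ ^ (n + 1 - r)) f =
      PowerSeries.C (∏ j : Fin r, (l j : ℚ)) * PowerSeries.X *
        ((Polynomial.aeval θ
            (∏ j : Fin r, ∏ m ∈ Finset.Icc 1 (l j - 1),
              (Polynomial.C (l j : ℚ) * Polynomial.X + Polynomial.C (m : ℚ)))) f) := by
  set P : Polynomial ℚ := ∏ j : Fin r, ∏ m ∈ Finset.Icc 1 (l j - 1),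
      (Polynomial.C (l j : ℚ) * Polynomial.X + Polynomial.C (m : ℚ)) with hP
  ext d
  rw [coeff_theta_pow θ hθ, mul_assoc, PowerSeries.coeff_C_mul]
  cases d with
  | zero =>
    have h0 : (((0 : ℕ) : ℚ)) ^ (n + 1 - r) = 0 := by
      rw [Nat.cast_zero, zero_pow (by omega)]
    simp [h0]
    exact Or.inl (by omega)
  | succ e =>
    rw [PowerSeries.coeff_succ_X_mul, coeff_aeval θ hθ]
    have hPeval : P.eval (e : ℚ) =
        ∏ j : Fin r, ∏ m ∈ Finset.Icc 1 (l j - 1), ((l j : ℚ) * e + m) := by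
      simp [hP, Polynomial.eval_prod]
    rw [hPeval, hf]
    simp only [PowerSeries.coeff_mk]
    -- key factorial identity, in ℕ
    have hfactN : ∀ j : Fin r, (l j * (e + 1)).factorial =
        (l j * e).factorial * ((∏ m ∈ Finset.Icc 1 (l j - 1), (l j * e + m)) *
          (l j * (e + 1))) := by
      intro j
      have h1 : l j * (e + 1) = l j * e + l j := by ring
      have hlj := hl j
      have h3 : l j = (l j - 1) + 1 := by omega
      rw [h1, fact_add_prod,
        show (Finset.Icc 1 (l j)) = Finset.Icc 1 ((l j - 1) + 1) from by rw [← h3],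
        Finset.prod_Icc_succ_top (Nat.one_le_iff_ne_zero.mpr (Nat.succ_ne_zero _)),
        ← h3]
      try ring
    have hfact : ∀ j : Fin r, ((l j * (e + 1)).factorial : ℚ) =
        (l j * e).factorial * ((∏ m ∈ Finset.Icc 1 (l j - 1), ((l j : ℚ) * e + m)) *
          ((l j : ℚ) * ((e : ℚ) + 1))) := by
      intro j
      rw [hfactN j]
      push_cast
      ring
    rw [Finset.prod_congr rfl fun j _ => hfact j]
    rw [Finset.prod_mul_distrib, Finset.prod_mul_distrib, Finset.prod_mul_distrib]
    simp only [Finset.prod_const, Finset.card_univ, Fintype.card_fin]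
    have hne : ((e : ℚ) + 1) ≠ 0 := by positivity
    have hfe : ((e.factorial : ℚ)) ≠ 0 := Nat.cast_ne_zero.mpr e.factorial_ne_zero
    have hfsucc : (((e + 1).factorial : ℚ)) = ((e : ℚ) + 1) * e.factorial := by
      rw [Nat.factorial_succ]; push_cast; ring
    have hnr : n + 1 - r + r = n + 1 := by omega
    rw [hfsucc]
    push_cast
    field_simp
    rw [mul_pow, show ((e : ℚ) + 1) ^ (n + 1) = ((e : ℚ) + 1) ^ (n + 1 - r) * ((e : ℚ) + 1) ^ r
      from by rw [← pow_add, hnr]]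
    ring
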